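/- Let K be a field of characteristic zero and let g be a finite-dimensional Lie algebra over K. Then for every Lie algebra h over K there exists a universal pair for (g, h): a commutative K-algebra A together with a Lie algebra morphism η : h → A ⊗ g such that for every commutative K-algebra C and every Lie algebra morphism f : h → C ⊗ g there exists a unique K-algebra homomorphism Φ : A → C with f = (Φ ⊗ id_g) ∘ η. (Equivalently, the functor g ⊗ − : ComAlg_K → LieAlg_K admits a left adjoint.) -/

import Mathlib

/-!
Statement 0: For a field `K` of characteristic zero and a finite-dimensional Lie algebra `g`
over `K`, every Lie algebra `h` over `K` admits a universal pair for `(g, h)`: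
a commutative `K`-algebra `A` together with a Lie algebra morphism `η : h → A ⊗ g` such that
every Lie algebra morphism `f : h → C ⊗ g` into a base change along a commutative `K`-algebra `C`
factors as `f = (Φ ⊗ id) ∘ η` for a unique `K`-algebra homomorphism `Φ : A → C`.
-/

open TensorProduct

universe u

open Module

set_option maxHeartbeats 1000000
set_option synthInstance.maxHeartbeats 400000

/-- The base-change Lie bracket on `A ⊗[K] g` is `K`-bilinear, so `A ⊗[K] g` is a Lie algebra
over `K` (and not merely over `A`). -/
noncomputable instance baseChangeLieAlgebra {K : Type u} [Field K]
    {A : Type u} [CommRing A] [Algebra K A]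
    {L : Type u} [LieRing L] [LieAlgebra K L] : LieAlgebra K (A ⊗[K] L) :=
  { (inferInstance : Module K (A ⊗[K] L)) with
    lie_smul := fun t x y => by
      rw [← algebraMap_smul A t y, lie_smul, algebraMap_smul] }

/-- `(A, η)` is a universal pair for `(g, h)`: for every commutative `K`-algebra `C` and
every Lie algebra morphism `f : h → C ⊗ g` there is a unique `K`-algebra homomorphism
`Φ : A → C` with `f = (Φ ⊗ id_g) ∘ η`. -/
def IsUniversalLiePair (K : Type u) [Field K]
    (g : Type u) [LieRing g] [LieAlgebra K g]
    (h : Type u) [LieRing h] [LieAlgebra K h]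
    (A : Type u) [CommRing A] [Algebra K A]
    (η : h →ₗ⁅K⁆ A ⊗[K] g) : Prop :=
  ∀ (C : Type u) [CommRing C] [Algebra K C], ∀ f : h →ₗ⁅K⁆ C ⊗[K] g,
    ∃! Φ : A →ₐ[K] C, ∀ x : h, f x = LinearMap.rTensor g Φ.toLinearMap (η x)

/-- A universal pair for `(g, h)`: a commutative `K`-algebra together with a Lie algebra
morphism `η : h → A ⊗ g` satisfying the universal property. -/
structure UniversalLiePair (K : Type u) [Field K]
    (g : Type u) [LieRing g] [LieAlgebra K g]
    (h : Type u) [LieRing h] [LieAlgebra K h] : Type (u + 1) where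
  A : Type u
  [commRingA : CommRing A]
  [algebraA : Algebra K A]
  η : h →ₗ⁅K⁆ A ⊗[K] g
  universal : IsUniversalLiePair K g h A η

namespace UP
variable (K : Type u) [Field K]
  (g : Type u) [LieRing g] [LieAlgebra K g] [FiniteDimensional K g]
  (h : Type u) [LieRing h] [LieAlgebra K h]

noncomputable def gB : Basis (Fin (Module.finrank K g)) K g := Module.finBasis K g

noncomputable def sc (k i j : Fin (Module.finrank K g)) : K :=
  (gB K g).repr ⁅gB K g i, gB K g j⁆ k

lemma gB_lie (i j : Fin (Module.finrank K g)) :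
    ⁅gB K g i, gB K g j⁆ = ∑ k, sc K g k i j • gB K g k :=
  ((gB K g).sum_repr _).symm

-- generic sum-bracket lemmas
variable {L : Type u} [LieRing L]

lemma sum_lie' {α : Type*} (s : Finset α) (f : α → L) (y : L) :
    ⁅∑ i ∈ s, f i, y⁆ = ∑ i ∈ s, ⁅f i, y⁆ := by
  induction s using Finset.cons_induction with
  | empty => simp
  | cons a s ha ih => simp [Finset.sum_cons, add_lie, ih]

lemma lie_sum' {α : Type*} (s : Finset α) (f : α → L) (x : L) :
    ⁅x, ∑ i ∈ s, f i⁆ = ∑ i ∈ s, ⁅x, f i⁆ := by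
  induction s using Finset.cons_induction with
  | empty => simp
  | cons a s ha ih => simp [Finset.sum_cons, lie_add, ih]

/-- Generic bracket expansion in a base change, in coordinates. -/
lemma bracket_expand (C : Type u) [CommRing C] [Algebra K C]
    (a a' : Fin (Module.finrank K g) → C) :
    ⁅∑ i, a i ⊗ₜ[K] gB K g i, ∑ i', a' i' ⊗ₜ[K] gB K g i'⁆
      = ∑ k, (∑ i, ∑ i', sc K g k i i' • (a i * a' i')) ⊗ₜ[K] gB K g k := by
  rw [sum_lie']
  simp_rw [lie_sum', LieAlgebra.ExtendScalars.bracket_tmul, gB_lie, tmul_sum, tmul_smul,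
    smul_tmul']
  simp_rw [sum_tmul]
  exact (Finset.sum_congr rfl fun i _ => Finset.sum_comm).trans Finset.sum_comm



set_option linter.unusedSectionVars false

noncomputable def bh : Basis (Basis.ofVectorSpaceIndex K h) K h := Basis.ofVectorSpace K h

abbrev R := MvPolynomial (Fin (Module.finrank K g) × Basis.ofVectorSpaceIndex K h) K

noncomputable def ηR (i : Fin (Module.finrank K g)) : h →ₗ[K] R K g h :=
  (bh K h).constr K fun j => MvPolynomial.X (i, j)

@[simp] lemma ηR_basis (i : Fin (Module.finrank K g)) (j : Basis.ofVectorSpaceIndex K h) :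
    ηR K g h i (bh K h j) = MvPolynomial.X (i, j) := Basis.constr_basis _ _ _ _

noncomputable def I : Ideal (R K g h) := Ideal.span
  {p | ∃ k j j', p = ηR K g h k ⁅bh K h j, bh K h j'⁆ -
    ∑ i, ∑ i', sc K g k i i' • (MvPolynomial.X (i, j) * MvPolynomial.X (i', j'))}

abbrev A := R K g h ⧸ I K g h

noncomputable def π : R K g h →ₐ[K] A K g h := Ideal.Quotient.mkₐ K _

lemma key (k : Fin (Module.finrank K g)) (j j' : Basis.ofVectorSpaceIndex K h) :
    π K g h (ηR K g h k ⁅bh K h j, bh K h j'⁆)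
      = ∑ i, ∑ i', sc K g k i i' •
          (π K g h (MvPolynomial.X (i, j)) * π K g h (MvPolynomial.X (i', j'))) := by
  rw [← sub_eq_zero]
  have hmem : (ηR K g h k ⁅bh K h j, bh K h j'⁆ -
      ∑ i, ∑ i', sc K g k i i' • (MvPolynomial.X (i, j) * MvPolynomial.X (i', j'))) ∈ I K g h :=
    Ideal.subset_span ⟨k, j, j', rfl⟩
  have h0 : π K g h (ηR K g h k ⁅bh K h j, bh K h j'⁆ -
      ∑ i, ∑ i', sc K g k i i' • (MvPolynomial.X (i, j) * MvPolynomial.X (i', j'))) = 0 := by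
    show Ideal.Quotient.mk (I K g h) _ = 0
    exact Ideal.Quotient.eq_zero_iff_mem.mpr hmem
  rw [map_sub] at h0
  rw [← h0]
  congr 1
  simp [map_sum]

noncomputable def ηlin : h →ₗ[K] A K g h ⊗[K] g :=
  ∑ i, ((TensorProduct.mk K (A K g h) g).flip (gB K g i)).comp
    ((π K g h).toLinearMap.comp (ηR K g h i))

lemma ηlin_apply (x : h) :
    ηlin K g h x = ∑ i, π K g h (ηR K g h i x) ⊗ₜ[K] gB K g i := by
  simp [ηlin]

attribute [local instance 100] LieRing.ofAssociativeRing

lemma ηlin_lie (x y : h) : ηlin K g h ⁅x, y⁆ = ⁅ηlin K g h x, ηlin K g h y⁆ := by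
  have hbasis : ∀ (j j' : Basis.ofVectorSpaceIndex K h),
      ηlin K g h ⁅bh K h j, bh K h j'⁆ = ⁅ηlin K g h (bh K h j), ηlin K g h (bh K h j')⁆ := by
    intro j j'
    rw [ηlin_apply, ηlin_apply, ηlin_apply]
    simp only [ηR_basis]
    rw [bracket_expand]
    refine Finset.sum_congr rfl fun k _ => ?_
    rw [key]
  -- bilinearity
  have hD : ((LieAlgebra.ad K h).toLinearMap.compr₂ (ηlin K g h)) =
      (((LieAlgebra.ad K (A K g h ⊗[K] g)).toLinearMap.comp (ηlin K g h)).compl₂ (ηlin K g h)) := by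
    apply Basis.ext (bh K h); intro j
    apply Basis.ext (bh K h); intro j'
    simpa using hbasis j j'
  have := LinearMap.congr_fun (LinearMap.congr_fun hD x) y
  simpa using this

noncomputable def η : h →ₗ⁅K⁆ A K g h ⊗[K] g :=
  { ηlin K g h with map_lie' := fun {x y} => ηlin_lie K g h x y }

lemma η_apply (x : h) : η K g h x = ηlin K g h x := rfl

-- C-side coordinate lemmas
variable (C : Type u) [CommRing C] [Algebra K C]

lemma sum_coord (z : C ⊗[K] g) :
    ∑ i, ((gB K g).baseChange C).repr z i ⊗ₜ[K] gB K g i = z := by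
  conv_rhs => rw [← ((gB K g).baseChange C).sum_repr z]
  refine Finset.sum_congr rfl fun i _ => ?_
  rw [Basis.baseChange_apply, smul_tmul', smul_eq_mul, mul_one]

lemma coord_sum (c : Fin (Module.finrank K g) → C) (k : Fin (Module.finrank K g)) :
    ((gB K g).baseChange C).repr (∑ i, c i ⊗ₜ[K] gB K g i) k = c k := by
  have : ∀ i, (c i ⊗ₜ[K] gB K g i) = c i • ((gB K g).baseChange C) i := by
    intro i; rw [Basis.baseChange_apply, smul_tmul', smul_eq_mul, mul_one]
  simp_rw [this, map_sum, map_smul]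
  simp [Basis.repr_self, Finsupp.single_apply]

end UP

/-- If `g` is a finite-dimensional Lie algebra over a field `K` of characteristic zero, then
for every Lie algebra `h` over `K` there exists a universal pair for `(g, h)`. -/
theorem exists_universalLiePair_of_finiteDimensional
    (K : Type u) [Field K] [CharZero K]
    (g : Type u) [LieRing g] [LieAlgebra K g] [FiniteDimensional K g]
    (h : Type u) [LieRing h] [LieAlgebra K h] :
    Nonempty (UniversalLiePair K g h) := by
  classical
  refine ⟨⟨UP.A K g h, UP.η K g h, ?_⟩⟩
  intro C _ _ f
  set bC := (UP.gB K g).baseChange C with hbC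
  -- coordinate functionals, K-linear
  let fci : Fin (Module.finrank K g) → (h →ₗ[K] C) := fun i =>
    ((((Finsupp.lapply i).comp bC.repr.toLinearMap).restrictScalars K).comp f.toLinearMap)
  have hfci : ∀ i x, fci i x = bC.repr (f x) i := fun i x => rfl
  -- expansion of f in coordinates
  have hexp : ∀ x : h, f x = ∑ i, fci i x ⊗ₜ[K] UP.gB K g i := by
    intro x
    conv_lhs => rw [← UP.sum_coord K g C (f x)]
    exact Finset.sum_congr rfl fun i _ => by rw [hfci]
  -- the structural relation satisfied by the coordinates
  have hrel : ∀ (k : Fin (Module.finrank K g)) (j j' : Basis.ofVectorSpaceIndex K h),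
      fci k ⁅UP.bh K h j, UP.bh K h j'⁆
        = ∑ i, ∑ i', UP.sc K g k i i' • (fci i (UP.bh K h j) * fci i' (UP.bh K h j')) := by
    intro k j j'
    rw [hfci, f.map_lie, hexp (UP.bh K h j), hexp (UP.bh K h j'), UP.bracket_expand,
      UP.coord_sum]
  -- the algebra morphism on the polynomial ring
  let Φ₀ : UP.R K g h →ₐ[K] C := MvPolynomial.aeval fun p => fci p.1 (UP.bh K h p.2)
  have hΦ₀X : ∀ (i : Fin (Module.finrank K g)) (j : Basis.ofVectorSpaceIndex K h),
      Φ₀ (MvPolynomial.X (i, j)) = fci i (UP.bh K h j) := fun i j => MvPolynomial.aeval_X _ _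
  have hΦ₀η : ∀ i, Φ₀.toLinearMap.comp (UP.ηR K g h i) = fci i := by
    intro i
    apply Basis.ext (UP.bh K h)
    intro j
    simp [UP.ηR_basis, hΦ₀X]
  have hker : ∀ a ∈ UP.I K g h, Φ₀ a = 0 := by
    have hle : UP.I K g h ≤ RingHom.ker Φ₀.toRingHom := by
      rw [UP.I, Ideal.span_le]
      rintro p ⟨k, j, j', rfl⟩
      have h1 : Φ₀ (UP.ηR K g h k ⁅UP.bh K h j, UP.bh K h j'⁆)
          = fci k ⁅UP.bh K h j, UP.bh K h j'⁆ := LinearMap.congr_fun (hΦ₀η k) _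
      have : Φ₀ (UP.ηR K g h k ⁅UP.bh K h j, UP.bh K h j'⁆ -
          ∑ i, ∑ i', UP.sc K g k i i' • (MvPolynomial.X (i, j) * MvPolynomial.X (i', j'))) = 0 := by
        rw [map_sub, sub_eq_zero, h1, hrel]
        simp [map_sum, map_mul, hΦ₀X]
      exact this
    intro a ha
    exact hle ha
  let Φ : UP.A K g h →ₐ[K] C := Ideal.Quotient.liftₐ (UP.I K g h) Φ₀ hker
  have hΦπ : ∀ r, Φ (UP.π K g h r) = Φ₀ r := fun r =>
    AlgHom.congr_fun (Ideal.Quotient.liftₐ_comp (UP.I K g h) Φ₀ hker) r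
  have hfactor : ∀ (Ψ : UP.A K g h →ₐ[K] C),
      (∀ i j, Ψ (UP.π K g h (MvPolynomial.X (i, j))) = fci i (UP.bh K h j)) →
      ∀ x : h, f x = LinearMap.rTensor g Ψ.toLinearMap (UP.η K g h x) := by
    intro Ψ hΨ
    have : f.toLinearMap = (LinearMap.rTensor g Ψ.toLinearMap).comp (UP.ηlin K g h) := by
      apply Basis.ext (UP.bh K h)
      intro j
      rw [LinearMap.comp_apply, UP.ηlin_apply]
      simp only [UP.ηR_basis]
      rw [map_sum]
      simp only [LinearMap.rTensor_tmul, AlgHom.toLinearMap_apply, hΨ]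
      simpa using hexp (UP.bh K h j)
    intro x
    exact LinearMap.congr_fun this x
  refine ⟨Φ, ?_, ?_⟩
  · exact hfactor Φ fun i j => by rw [hΦπ, hΦ₀X]
  · -- uniqueness
    intro Φ' hΦ'
    have hgen : ∀ (i : Fin (Module.finrank K g)) (j : Basis.ofVectorSpaceIndex K h),
        Φ' (UP.π K g h (MvPolynomial.X (i, j))) = fci i (UP.bh K h j) := by
      intro i j
      have h1 := hΦ' (UP.bh K h j)
      rw [UP.η_apply, UP.ηlin_apply] at h1
      simp only [UP.ηR_basis] at h1
      rw [map_sum] at h1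
      simp only [LinearMap.rTensor_tmul, AlgHom.toLinearMap_apply] at h1
      have h2 := congrArg (fun z => bC.repr z i) h1
      rw [UP.coord_sum] at h2
      rw [← h2, hfci]
    have hcomp : Φ'.comp (UP.π K g h) = Φ.comp (UP.π K g h) := by
      apply MvPolynomial.algHom_ext
      rintro ⟨i, j⟩
      simp only [AlgHom.comp_apply]
      rw [hgen, hΦπ, hΦ₀X]
    apply AlgHom.ext
    intro a
    obtain ⟨r, rfl⟩ := Ideal.Quotient.mkₐ_surjective K (UP.I K g h) a
    exact AlgHom.congr_fun hcomp r
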